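/- arXiv:2211.13700 — 3 statements merged into one kernel-verified Lean document; each statement's English description precedes it below -/
import Mathlib

section
/- Let N be odd and q a primitive N-th root of unity. In V = ℂ^N with the subspaces V^± spanned by v_i^± := e_i ± e_{−i}, the operator U+U⁻¹ acts by (U+U⁻¹)v_i^± = (q^i + q^{−i})v_i^±, and the operator W+W⁻¹ acts by (W+W⁻¹)v_i^± = v_{i−1}^± + v_{i+1}^±. The restriction of the algebra generated by U+U⁻¹ and W+W⁻¹ to each of V^+ and V^− is irreducible. -/
/-- The operator `U` on `ℂ^N = (ZMod N → ℂ)` defined by `U e_i = q^i • e_i`. -/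
noncomputable def Uop (N : ℕ) (q : ℂ) : (ZMod N → ℂ) →ₗ[ℂ] (ZMod N → ℂ) where
  toFun f := fun i => q ^ i.val * f i
  map_add' _ _ := by funext i; simp [mul_add]
  map_smul' _ _ := by funext i; simp [smul_eq_mul]; ring

/-- The operator `W` on `ℂ^N = (ZMod N → ℂ)` defined by `W e_i = e_{i+1}`. -/
def Wop (N : ℕ) : (ZMod N → ℂ) →ₗ[ℂ] (ZMod N → ℂ) where
  toFun f := fun i => f (i - 1)
  map_add' _ _ := rfl
  map_smul' _ _ := rfl

/-- The operator `W⁻¹` on `ℂ^N`, with `W⁻¹ e_i = e_{i-1}`. -/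
def Winv (N : ℕ) : (ZMod N → ℂ) →ₗ[ℂ] (ZMod N → ℂ) where
  toFun f := fun i => f (i + 1)
  map_add' _ _ := rfl
  map_smul' _ _ := rfl

/-- The involution `θ` on `ℂ^N` with `θ e_i = e_{-i}`. -/
def thetaOp (N : ℕ) : (ZMod N → ℂ) →ₗ[ℂ] (ZMod N → ℂ) where
  toFun f := fun i => f (-i)
  map_add' _ _ := rfl
  map_smul' _ _ := rfl

/-- The vector `v_i^± = e_i ± e_{-i}` (with `s = ±1`). -/
noncomputable def vSym (N : ℕ) (s : ℂ) (i : ZMod N) : ZMod N → ℂ :=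
  (Pi.single i 1 : ZMod N → ℂ) + s • (Pi.single (-i) 1 : ZMod N → ℂ)

noncomputable def lamd (N : ℕ) (q : ℂ) (j : ZMod N) : ℂ := q ^ j.val + (q ^ j.val)⁻¹

lemma hA_apply (N : ℕ) (q : ℂ) (f : ZMod N → ℂ) :
    (Uop N q + Uop N q⁻¹) f = fun j => lamd N q j * f j := by
  funext j
  show q ^ j.val * f j + (q⁻¹) ^ j.val * f j = _
  rw [inv_pow, lamd]; ring

lemma pow_val_mod (N : ℕ) {q : ℂ} (hq : q ^ N = 1) (x : ℕ) : q ^ (x % N) = q ^ x := by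
  conv_rhs => rw [← Nat.div_add_mod x N, pow_add, pow_mul, hq, one_pow, one_mul]

lemma pow_val_add {N : ℕ} [NeZero N] {q : ℂ} (hq : q ^ N = 1) (a b : ZMod N) :
    q ^ (a + b).val = q ^ a.val * q ^ b.val := by
  rw [ZMod.val_add, pow_val_mod N hq, pow_add]

lemma pow_val_neg {N : ℕ} [NeZero N] {q : ℂ} (hq : q ^ N = 1) (a : ZMod N) :
    q ^ (-a).val = (q ^ a.val)⁻¹ := by
  refine eq_inv_of_mul_eq_one_left ?_
  rw [← pow_val_add hq, neg_add_cancel]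
  simp [ZMod.val_zero]

lemma lamd_neg {N : ℕ} [NeZero N] {q : ℂ} (hq : q ^ N = 1) (a : ZMod N) :
    lamd N q (-a) = lamd N q a := by
  rw [lamd, lamd, pow_val_neg hq, inv_inv, add_comm]

lemma lamd_inj {N : ℕ} [NeZero N] {q : ℂ} (hq : IsPrimitiveRoot q N) {i j : ZMod N}
    (h : lamd N q j = lamd N q i) : j = i ∨ j = -i := by
  have hq0 : q ≠ 0 := hq.ne_zero (NeZero.ne N)
  have hx : q ^ j.val ≠ 0 := pow_ne_zero _ hq0
  have hy : q ^ i.val ≠ 0 := pow_ne_zero _ hq0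
  rw [lamd, lamd] at h
  have h2 : (q ^ j.val - q ^ i.val) * (q ^ j.val * q ^ i.val - 1) = 0 := by
    field_simp at h
    linear_combination h
  rcases mul_eq_zero.mp h2 with h3 | h3
  · left
    have hval := hq.pow_inj (ZMod.val_lt j) (ZMod.val_lt i) (sub_eq_zero.mp h3)
    calc j = ((j.val : ℕ) : ZMod N) := (ZMod.natCast_rightInverse j).symm
    _ = ((i.val : ℕ) : ZMod N) := by rw [hval]
    _ = i := ZMod.natCast_rightInverse i
  · right
    have h4 : q ^ (j.val + i.val) = 1 := by rw [pow_add]; exact sub_eq_zero.mp h3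
    have h5 : N ∣ j.val + i.val := (hq.pow_eq_one_iff_dvd _).mp h4
    have h6 : ((j.val + i.val : ℕ) : ZMod N) = 0 := (ZMod.natCast_eq_zero_iff _ _).mpr h5
    push_cast at h6
    rw [ZMod.natCast_rightInverse j, ZMod.natCast_rightInverse i] at h6
    exact eq_neg_of_add_eq_zero_left h6

lemma vSym_apply (N : ℕ) (s : ℂ) (i j : ZMod N) :
    vSym N s i j = (if j = i then 1 else 0) + s * (if j = -i then 1 else 0) := by
  simp [vSym, Pi.single_apply]

lemma LA {N : ℕ} [NeZero N] {q : ℂ} (hqN : q ^ N = 1) (s : ℂ) (i : ZMod N) :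
    (Uop N q + Uop N q⁻¹) (vSym N s i) = (q ^ i.val + (q ^ i.val)⁻¹) • vSym N s i := by
  rw [hA_apply]
  funext j
  show lamd N q j * vSym N s i j = lamd N q i * vSym N s i j
  by_cases h1 : j = i
  · rw [h1]
  · by_cases h2 : j = -i
    · rw [h2, lamd_neg hqN]
    · simp [vSym_apply, h1, h2]

lemma Wop_single (N : ℕ) (a : ZMod N) (c : ℂ) :
    Wop N (Pi.single a c) = Pi.single (a + 1) c := by
  funext j
  show (Pi.single a c : ZMod N → ℂ) (j - 1) = _
  simp only [Pi.single_apply, sub_eq_iff_eq_add]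

lemma Winv_single (N : ℕ) (a : ZMod N) (c : ℂ) :
    Winv N (Pi.single a c) = Pi.single (a - 1) c := by
  funext j
  show (Pi.single a c : ZMod N → ℂ) (j + 1) = _
  simp only [Pi.single_apply, eq_sub_iff_add_eq]

lemma LB (N : ℕ) (s : ℂ) (i : ZMod N) :
    (Wop N + Winv N) (vSym N s i) = vSym N s (i - 1) + vSym N s (i + 1) := by
  have e1 : -i + 1 = -(i - 1) := by ring
  have e2 : -i - 1 = -(i + 1) := by ring
  simp only [vSym, LinearMap.add_apply, map_add, map_smul, Wop_single, Winv_single, e1, e2]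
  abel_nf
  rw [smul_add]

lemma poly_mem {N : ℕ} {q : ℂ} (p : Submodule ℂ (ZMod N → ℂ))
    (hA : ∀ v ∈ p, (Uop N q + Uop N q⁻¹) v ∈ p) {v : ZMod N → ℂ} (hv : v ∈ p)
    (P : Polynomial ℂ) : (fun j => P.eval (lamd N q j) * v j) ∈ p := by
  induction P using Polynomial.induction_on with
  | C a =>
      have : (fun j => (Polynomial.C a).eval (lamd N q j) * v j) = a • v := by
        funext j; simp [smul_eq_mul]
      rw [this]; exact p.smul_mem a hv
  | add P Q hP hQ =>
      have : (fun j => (P + Q).eval (lamd N q j) * v j)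
          = (fun j => P.eval (lamd N q j) * v j) + (fun j => Q.eval (lamd N q j) * v j) := by
        funext j; simp [add_mul]
      rw [this]; exact p.add_mem hP hQ
  | monomial n a hP =>
      have := hA _ hP
      rw [hA_apply] at this
      have e : (fun j => (Polynomial.C a * Polynomial.X ^ (n + 1)).eval (lamd N q j) * v j)
          = fun j => lamd N q j * ((Polynomial.C a * Polynomial.X ^ n).eval (lamd N q j) * v j) := by
        funext j; simp; ring
      rw [e]; exact this

lemma eig_apply {N : ℕ} {s : ℂ} {v : ZMod N → ℂ}
    (hv : v ∈ Module.End.eigenspace (thetaOp N) s) (j : ZMod N) : v (-j) = s * v j := by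
  rw [Module.End.mem_eigenspace_iff] at hv
  exact congrFun hv j

lemma claimC {N : ℕ} [NeZero N] {q : ℂ} (hq : IsPrimitiveRoot q N) {s : ℂ}
    (hs : s = 1 ∨ s = -1) (p : Submodule ℂ (ZMod N → ℂ))
    (hple : p ≤ Module.End.eigenspace (thetaOp N) s)
    (hA : ∀ v ∈ p, (Uop N q + Uop N q⁻¹) v ∈ p)
    {v : ZMod N → ℂ} (hv : v ∈ p) {i : ZMod N} (hvi : v i ≠ 0) :
    vSym N s i ∈ p := by
  classical
  have hE := hple hv
  -- Lagrange polynomial taking value 1 at lamd i, 0 at other lamd values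
  set T : Finset ℂ := Finset.image (lamd N q) Finset.univ with hT
  set P : Polynomial ℂ :=
    Lagrange.interpolate T id (fun x => if x = lamd N q i then 1 else 0) with hP
  have hinj : Set.InjOn (id : ℂ → ℂ) T := Function.injective_id.injOn
  have hPeval : ∀ j : ZMod N, P.eval (lamd N q j) = if lamd N q j = lamd N q i then 1 else 0 := by
    intro j
    have hmem : lamd N q j ∈ T := Finset.mem_image_of_mem _ (Finset.mem_univ j)
    exact Lagrange.eval_interpolate_at_node _ hinj hmem
  have hw : (fun j => P.eval (lamd N q j) * v j) ∈ p := poly_mem p hA hv P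
  have hwval : ∀ j, P.eval (lamd N q j) * v j = if lamd N q j = lamd N q i then v j else 0 := by
    intro j; rw [hPeval]; split <;> simp
  by_cases hii : i = -i
  · -- s must be 1
    have hvii : v i = s * v i := by conv_lhs => rw [hii, eig_apply hE]
    have hs1 : s = 1 := by
      rcases hs with h | h
      · exact h
      · exfalso; rw [h] at hvii
        apply hvi
        have : (2 : ℂ) * v i = 0 := by linear_combination hvii
        simpa using this
    have hfun : (fun j => P.eval (lamd N q j) * v j) = ((v i / 2)) • vSym N s i := by
      funext j
      rw [hwval, Pi.smul_apply, vSym_apply, ← hii]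
      by_cases hji : j = i
      · subst hji; simp [hs1]; ring
      · have : lamd N q j ≠ lamd N q i := by
          intro h
          rcases lamd_inj hq h with h' | h'
          · exact hji h'
          · exact hji (h'.trans hii.symm)
        simp [this, hji, smul_eq_mul]
    rw [hfun] at hw
    have := p.smul_mem (2 / v i) hw
    rwa [smul_smul, div_mul_div_comm, mul_comm, div_self (by simpa using mul_ne_zero hvi two_ne_zero), one_smul] at this
  · have hfun : (fun j => P.eval (lamd N q j) * v j) = v i • vSym N s i := by
      funext j
      rw [hwval, Pi.smul_apply, vSym_apply, smul_eq_mul]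
      by_cases hji : j = i
      · subst hji
        simp [hii]
      · by_cases hji' : j = -i
        · subst hji'
          have h1 : lamd N q (-i) = lamd N q i := lamd_neg hq.pow_eq_one i
          have h2 : ¬ (-i = i) := fun h => hii h.symm
          rw [if_pos h1, if_neg h2, if_pos rfl]
          rw [eig_apply hE]
          ring
        · have : lamd N q j ≠ lamd N q i := by
            intro h
            rcases lamd_inj hq h with h' | h'
            · exact hji h'
            · exact hji' h'
          simp [this, hji, hji']
    rw [hfun] at hw
    have := p.smul_mem (v i)⁻¹ hw
    rwa [smul_smul, inv_mul_cancel₀ hvi, one_smul] at this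

lemma vSym_neg {N : ℕ} {s : ℂ} (hss : s * s = 1) (i : ZMod N) :
    vSym N s (-i) = s • vSym N s i := by
  funext j
  rw [Pi.smul_apply, vSym_apply, vSym_apply, neg_neg, smul_eq_mul, mul_add, ← mul_assoc, hss,
    one_mul, add_comm]

/-- For `N` odd and `q` a primitive `N`-th root of unity, on the eigenspaces
`V^± = {v : θv = ±v}` (spanned by the `v_i^± = e_i ± e_{-i}`) one has
`(U+U⁻¹) v_i^± = (q^i + q^{-i}) v_i^±` and `(W+W⁻¹) v_i^± = v_{i-1}^± + v_{i+1}^±`,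
and the restriction of the algebra generated by `U+U⁻¹` and `W+W⁻¹` to each
eigenspace is irreducible. -/
theorem vSym_action_and_irreducible (N : ℕ) (hN : Odd N)
    (q : ℂ) (hq : IsPrimitiveRoot q N) (s : ℂ) (hs : s = 1 ∨ s = -1) :
    (∀ i : ZMod N,
      (Uop N q + Uop N q⁻¹) (vSym N s i) = (q ^ i.val + (q ^ i.val)⁻¹) • vSym N s i ∧
      (Wop N + Winv N) (vSym N s i) = vSym N s (i - 1) + vSym N s (i + 1)) ∧
    (∀ p : Submodule ℂ (ZMod N → ℂ),
      p ≤ Module.End.eigenspace (thetaOp N) s →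
      (∀ v ∈ p, (Uop N q + Uop N q⁻¹) v ∈ p) →
      (∀ v ∈ p, (Wop N + Winv N) v ∈ p) →
      p = ⊥ ∨ p = Module.End.eigenspace (thetaOp N) s) := by
  haveI : NeZero N := ⟨hN.pos.ne'⟩
  have hqN : q ^ N = 1 := hq.pow_eq_one
  have hss : s * s = 1 := by rcases hs with h | h <;> rw [h] <;> norm_num
  constructor
  · intro i
    exact ⟨LA hqN s i, LB N s i⟩
  · intro p hple hA hB
    rcases eq_or_ne p ⊥ with hbot | hbot
    · exact Or.inl hbot
    right
    obtain ⟨v, hv, hv0⟩ := (Submodule.ne_bot_iff p).mp hbot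
    obtain ⟨i0, hvi0⟩ : ∃ i, v i ≠ 0 := by
      by_contra hcon
      push_neg at hcon
      exact hv0 (funext fun i => hcon i)
    have hstart : vSym N s i0 ∈ p := claimC hq hs p hple hA hv hvi0
    have step : ∀ a : ZMod N, vSym N s a ∈ p →
        (vSym N s (a - 1) + vSym N s (a + 1)) (a + 1) ≠ 0 → vSym N s (a + 1) ∈ p := by
      intro a ha hne
      have hu : vSym N s (a - 1) + vSym N s (a + 1) ∈ p := by
        rw [← LB]; exact hB _ ha
      exact claimC hq hs p hple hA hu hne
    obtain ⟨a, ha0, ha1⟩ : ∃ a, vSym N s a ∈ p ∧ vSym N s (a + 1) ∈ p := by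
      rcases hs with hs1 | hs1
      · refine ⟨i0, hstart, step i0 hstart ?_⟩
        rw [Pi.add_apply, vSym_apply, vSym_apply, hs1]
        split_ifs <;> norm_num
        all_goals exact absurd (rfl : i0 + 1 = i0 + 1) (by assumption)
      · -- s = -1
        have hii0 : i0 ≠ -i0 := by
          intro h
          apply hvi0
          have h1 : v (-i0) = s * v i0 := eig_apply (hple hv) i0
          rw [← h, hs1] at h1
          have h2 : (2 : ℂ) * v i0 = 0 := by linear_combination h1
          exact (mul_eq_zero.mp h2).resolve_left two_ne_zero
        have h20 : (2 : ZMod N) ≠ 0 := by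
          intro h
          apply hii0
          refine eq_neg_of_add_eq_zero_left ?_
          have : i0 + i0 = (2 : ZMod N) * i0 := by ring
          rw [this, h, zero_mul]
        have h2unit : IsUnit (2 : ZMod N) := by
          have hcop : Nat.Coprime 2 N := Nat.coprime_two_left.mpr hN
          have h := (ZMod.unitOfCoprime 2 hcop).isUnit
          rwa [ZMod.coe_unitOfCoprime, Nat.cast_ofNat] at h
        by_cases hc : i0 + 1 = -(i0 + 1)
        · have hmem : vSym N s (-i0) ∈ p := by
            rw [vSym_neg hss]; exact p.smul_mem s hstart
          refine ⟨-i0, hmem, step _ hmem ?_⟩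
          rw [Pi.add_apply, vSym_apply, vSym_apply, hs1]
          have c1 : ¬(-i0 + 1 = -i0 - 1) := fun h => h20 (by linear_combination h)
          have c2 : ¬(-i0 + 1 = -(-i0 - 1)) := fun h => hii0 (by linear_combination -h)
          have c3 : ¬(-i0 + 1 = -(-i0 + 1)) := by
            intro h
            -- combined with hc : i0 + 1 = -(i0+1), get 4 = 0
            have h4 : (2 : ZMod N) * 2 = 2 * 0 := by linear_combination h + hc
            exact h20 (h2unit.mul_left_cancel h4)
          rw [if_neg c1, if_neg c2, if_pos rfl, if_neg c3]
          norm_num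
        · refine ⟨i0, hstart, step _ hstart ?_⟩
          rw [Pi.add_apply, vSym_apply, vSym_apply, hs1]
          have c1 : ¬(i0 + 1 = i0 - 1) := fun h => h20 (by linear_combination h)
          have c2 : ¬(i0 + 1 = -(i0 - 1)) := fun h => hii0 (by linear_combination h)
          rw [if_neg c1, if_neg c2, if_pos rfl, if_neg hc]
          norm_num
    -- spread to all indices
    have hall' : ∀ k : ℕ, vSym N s (a + k) ∈ p ∧ vSym N s (a + k + 1) ∈ p := by
      intro k
      induction k with
      | zero => simpa using ⟨ha0, ha1⟩
      | succ k ih =>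
        have e : a + ((k + 1 : ℕ) : ZMod N) = a + k + 1 := by push_cast; ring
        refine ⟨by rw [e]; exact ih.2, ?_⟩
        rw [e]
        have hu : vSym N s (a + k + 1 - 1) + vSym N s (a + k + 1 + 1) ∈ p := by
          rw [← LB]; exact hB _ ih.2
        rw [add_sub_cancel_right] at hu
        have := p.sub_mem hu ih.1
        rwa [add_sub_cancel_left] at this
    have hall : ∀ j : ZMod N, vSym N s j ∈ p := by
      intro j
      have := (hall' (j - a).val).1
      rw [ZMod.natCast_rightInverse (j - a)] at this
      rwa [show a + (j - a) = j by ring] at this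
    refine le_antisymm hple ?_
    intro w hw
    have hwE : ∀ k, w (-k) = s * w k := fun k => eig_apply hw k
    have hcomp : w = (2 : ℂ)⁻¹ • ∑ j : ZMod N, w j • vSym N s j := by
      funext k
      rw [Pi.smul_apply, Finset.sum_apply, smul_eq_mul]
      have e : ∀ j : ZMod N, (w j • vSym N s j) k
          = (if j = k then w j else 0) + s * (if j = -k then w j else 0) := by
        intro j
        rw [Pi.smul_apply, smul_eq_mul, vSym_apply]
        have h1 : (k = j) ↔ (j = k) := eq_comm
        have h2 : (k = -j) ↔ (j = -k) := by rw [eq_comm, neg_eq_iff_eq_neg]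
        simp only [h1, h2]
        split_ifs <;> ring
      rw [Finset.sum_congr rfl fun j _ => e j, Finset.sum_add_distrib, ← Finset.mul_sum,
        Finset.sum_ite_eq' Finset.univ k w, Finset.sum_ite_eq' Finset.univ (-k) w]
      simp only [Finset.mem_univ, if_true]
      rw [hwE k]
      linear_combination -(2⁻¹ * w k) * hss
    rw [hcomp]
    exact p.smul_mem _ (Submodule.sum_mem p fun j _ => p.smul_mem _ (hall j))
end

section
/- Let N be odd, q = A² where A is a primitive N-th root of unity, and define quantum integers {n} := q^n − q^{−n}. Then for integers x, y with 0 ≤ y ≤ x ≤ N−1, the quantum binomial coefficient [x choose y]_q := ({x}·{x−1}···{y+1})/({x−y}!) satisfies [N−1−y choose N−1−x]_q = (−1)^{x−y}·[x choose y]_q. -/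
/-- The quantum integer `{n} = q^n - q^{-n}`. -/
noncomputable def qnum (q : ℂ) (n : ℕ) : ℂ := q ^ n - q⁻¹ ^ n

/-- The quantum factorial `{n}! = {n}{n-1}⋯{1}`. -/
noncomputable def qfact (q : ℂ) (n : ℕ) : ℂ := ∏ i ∈ Finset.range n, qnum q (i + 1)

/-- The quantum binomial `[x choose y] = ({x}{x-1}⋯{y+1}) / {x-y}!`. -/
noncomputable def qbinom (q : ℂ) (x y : ℕ) : ℂ :=
  (∏ i ∈ Finset.range (x - y), qnum q (x - i)) / qfact q (x - y)

lemma qnum_reflect (q : ℂ) (N n : ℕ) (_hq0 : q ≠ 0) (hqN : q ^ N = 1) (hn : n ≤ N) :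
    qnum q (N - n) = -(qnum q n) := by
  have h1 : q ^ (N - n) * q ^ n = 1 := by
    rw [← pow_add]; rw [Nat.sub_add_cancel hn]; exact hqN
  have h2 : q ^ (N - n) = q⁻¹ ^ n := by
    rw [inv_pow]; exact eq_inv_of_mul_eq_one_left h1
  have h3 : q⁻¹ ^ (N - n) = q ^ n := by
    have h1' : q⁻¹ ^ (N - n) * q⁻¹ ^ n = 1 := by
      rw [← pow_add, Nat.sub_add_cancel hn, inv_pow, hqN, inv_one]
    rw [eq_inv_of_mul_eq_one_left h1', ← inv_pow, inv_inv]
  simp [qnum, h2, h3]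

/-- For `N` odd, `q = A²` with `A` a primitive `N`-th root of unity, and
`0 ≤ y ≤ x ≤ N-1`, one has `[N-1-y choose N-1-x] = (-1)^{x-y} [x choose y]`. -/
theorem qbinom_reflection (N : ℕ) (hN : Odd N) (A : ℂ) (hA : IsPrimitiveRoot A N)
    (q : ℂ) (hq : q = A ^ 2) (x y : ℕ) (hyx : y ≤ x) (hxN : x ≤ N - 1) :
    qbinom q (N - 1 - y) (N - 1 - x) = (-1 : ℂ) ^ (x - y) * qbinom q x y := by
  have hN1 : 1 ≤ N := hN.pos
  have hqN : q ^ N = 1 := by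
    rw [hq, ← pow_mul, mul_comm, pow_mul, hA.pow_eq_one, one_pow]
  have hq0 : q ≠ 0 := by
    intro h; rw [h, zero_pow (by omega)] at hqN; exact zero_ne_one hqN
  have hd : (N - 1 - y) - (N - 1 - x) = x - y := by omega
  unfold qbinom
  rw [hd]
  have key : ∀ i ∈ Finset.range (x - y), qnum q (N - 1 - y - i)
      = -(qnum q (y + 1 + i)) := by
    intro i hi
    simp only [Finset.mem_range] at hi
    have h1 : N - 1 - y - i = N - (y + 1 + i) := by omega
    rw [h1, qnum_reflect q N _ hq0 hqN (by omega)]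
  rw [Finset.prod_congr rfl key]
  have hneg : ∏ i ∈ Finset.range (x - y), -qnum q (y + 1 + i)
      = ∏ i ∈ Finset.range (x - y), (-1 : ℂ) * qnum q (y + 1 + i) := by
    apply Finset.prod_congr rfl; intros; ring
  rw [hneg, Finset.prod_mul_distrib, Finset.prod_const, Finset.card_range,
    mul_div_assoc]
  congr 2
  rw [← Finset.prod_range_reflect]
  apply Finset.prod_congr rfl
  intro i hi
  simp only [Finset.mem_range] at hi
  congr 1
  omega
end

section
/- With V_α the N-dimensional module defined above for the unrolled quantum group at a primitive odd N-th root of unity q, if α ∈ ℂ satisfies e^{4iπα/N} ≠ q^{2j} for all j = 1,…,N−1 (e.g. α ∉ (1/2)ℤ), then V_α is a simple module: any nonzero submodule equals V_α. -/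
/-- `q = exp(2iπk/N)`. -/
noncomputable def qval (N k : ℕ) : ℂ :=
  Complex.exp (2 * Real.pi * Complex.I * k / N)

/-- `q^z := exp(2iπkz/N)` for complex exponents `z`. -/
noncomputable def qpow (N k : ℕ) (z : ℂ) : ℂ :=
  Complex.exp (2 * Real.pi * Complex.I * k * z / N)

/-- The quantum integer `[n] = (qⁿ - q⁻ⁿ)/(q - q⁻¹)`. -/
noncomputable def qint (N k : ℕ) (n : ℕ) : ℂ :=
  (qval N k ^ n - (qval N k)⁻¹ ^ n) / (qval N k - (qval N k)⁻¹)

/-- The coefficient of the action of `E` on `V_α`: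
`E v_n = [n]·(q⁻ⁿ e^{2iπα/N} - qⁿ e^{-2iπα/N})/(q - q⁻¹) · v_{n-1}`. -/
noncomputable def Ecoef (N k : ℕ) (α : ℂ) (n : ℕ) : ℂ :=
  qint N k n *
    ((qval N k)⁻¹ ^ n * Complex.exp (2 * Real.pi * Complex.I * α / N) -
      qval N k ^ n * Complex.exp (-(2 * Real.pi * Complex.I * α) / N)) /
    (qval N k - (qval N k)⁻¹)

/-- The action of `H` on `V_α`: `H v_n = (α/k + N - 1 - 2n) v_n`. -/
noncomputable def Hop (N k : ℕ) (α : ℂ) : (Fin N → ℂ) →ₗ[ℂ] (Fin N → ℂ) where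
  toFun f := fun n => (α / k + (N - 1 : ℂ) - 2 * n.val) * f n
  map_add' _ _ := by funext n; simp [mul_add]
  map_smul' _ _ := by funext n; simp [smul_eq_mul]; ring

/-- The action of `F` on `V_α`: `F v_n = v_{n+1}` and `F v_{N-1} = 0`. -/
def Fop (N : ℕ) : (Fin N → ℂ) →ₗ[ℂ] (Fin N → ℂ) where
  toFun f := fun n =>
    if h : 0 < n.val then f ⟨n.val - 1, lt_of_le_of_lt (Nat.sub_le _ _) n.isLt⟩ else 0
  map_add' f g := by
    funext n
    by_cases h : 0 < n.val <;> simp [h]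
  map_smul' c f := by
    funext n
    by_cases h : 0 < n.val <;> simp [h]

/-- The action of `E` on `V_α`:
`E v_n = [n]·(q⁻ⁿ e^{2iπα/N} - qⁿ e^{-2iπα/N})/(q - q⁻¹) · v_{n-1}` and `E v_0 = 0`. -/
noncomputable def Eop (N k : ℕ) (α : ℂ) : (Fin N → ℂ) →ₗ[ℂ] (Fin N → ℂ) where
  toFun f := fun n =>
    if h : n.val + 1 < N then Ecoef N k α (n.val + 1) * f ⟨n.val + 1, h⟩ else 0
  map_add' f g := by
    funext n
    by_cases h : n.val + 1 < N <;> simp [h, mul_add]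
  map_smul' c f := by
    funext n
    by_cases h : n.val + 1 < N <;> simp [h] <;> ring

/-- The action of `K = q^H` on `V_α`: `K v_n = q^{α/k + N - 1 - 2n} v_n`. -/
noncomputable def Kop (N k : ℕ) (α : ℂ) : (Fin N → ℂ) →ₗ[ℂ] (Fin N → ℂ) where
  toFun f := fun n => qpow N k (α / k + (N - 1 : ℂ) - 2 * n.val) * f n
  map_add' _ _ := by funext n; simp [mul_add]
  map_smul' _ _ := by funext n; simp [smul_eq_mul]; ring

/-- The action of `K⁻¹` on `V_α`. -/
noncomputable def Kinv (N k : ℕ) (α : ℂ) : (Fin N → ℂ) →ₗ[ℂ] (Fin N → ℂ) where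
  toFun f := fun n => qpow N k (-(α / k + (N - 1 : ℂ) - 2 * n.val)) * f n
  map_add' _ _ := by funext n; simp [mul_add]
  map_smul' _ _ := by funext n; simp [smul_eq_mul]; ring


section Aux

lemma qval_prim (N k' : ℕ) (hN : Odd N) (hN3 : 3 ≤ N) (hcop : Nat.Coprime k' N) :
    IsPrimitiveRoot (qval N (2 * k')) N := by
  have h2 : Nat.Coprime 2 N := hN.coprime_two_left
  have h := Complex.isPrimitiveRoot_exp_of_coprime (2 * k') N (by omega) (h2.mul hcop)
  have he : qval N (2 * k') = Complex.exp (2 * Real.pi * Complex.I * ((2 * k' : ℕ) / (N : ℂ))) := by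
    rw [qval, mul_div_assoc]
  rwa [he]

lemma Ecoef_ne_zero (N k' : ℕ) (hN : Odd N) (hN3 : 3 ≤ N)
    (hcop : Nat.Coprime k' N) (k : ℕ) (hk : k = 2 * k') (α : ℂ)
    (hα : ∀ j : ℕ, 1 ≤ j → j ≤ N - 1 →
      Complex.exp (4 * Real.pi * Complex.I * α / N) ≠ qval N k ^ (2 * j))
    (n : ℕ) (h1 : 1 ≤ n) (h2 : n ≤ N - 1) : Ecoef N k α n ≠ 0 := by
  subst hk
  have hprim := qval_prim N k' hN hN3 hcop
  set q := qval N (2 * k') with hqdef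
  have hq0 : q ≠ 0 := Complex.exp_ne_zero _
  have hpow1 : ∀ m : ℕ, q ^ m = 1 ↔ N ∣ m := fun m => hprim.pow_eq_one_iff_dvd m
  have hqsub : q - q⁻¹ ≠ 0 := by
    intro h
    have hq : q = q⁻¹ := sub_eq_zero.mp h
    have hq2 : q ^ 2 = 1 := by rw [sq]; nth_rw 2 [hq]; exact mul_inv_cancel₀ hq0
    have := Nat.le_of_dvd (by norm_num) ((hpow1 2).mp hq2)
    omega
  have hcop2 : Nat.Coprime N 2 := (hN.coprime_two_left).symm
  have hqn : q ^ n - q⁻¹ ^ n ≠ 0 := by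
    rw [inv_pow, sub_ne_zero]
    intro h
    have h2n : q ^ (2 * n) = 1 := by
      rw [two_mul, pow_add]
      nth_rw 1 [h]
      exact inv_mul_cancel₀ (pow_ne_zero _ hq0)
    have hdvd : N ∣ n := hcop2.dvd_of_dvd_mul_left ((hpow1 _).mp h2n)
    have := Nat.le_of_dvd (by omega) hdvd
    omega
  have hqint : qint N (2 * k') n ≠ 0 := div_ne_zero hqn hqsub
  set A := Complex.exp (2 * Real.pi * Complex.I * α / N) with hAdef
  have hA0 : A ≠ 0 := Complex.exp_ne_zero _
  have hB : Complex.exp (-(2 * Real.pi * Complex.I * α) / N) = A⁻¹ := by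
    rw [hAdef, ← Complex.exp_neg]; ring_nf
  have hA2 : A ^ 2 = Complex.exp (4 * Real.pi * Complex.I * α / N) := by
    rw [hAdef, sq, ← Complex.exp_add]; ring_nf
  have hfac : q⁻¹ ^ n * A - q ^ n * Complex.exp (-(2 * Real.pi * Complex.I * α) / N) ≠ 0 := by
    rw [hB]
    intro h
    have key : A ^ 2 - q ^ (2 * n) = (q ^ n * A) * (q⁻¹ ^ n * A - q ^ n * A⁻¹) := by
      rw [inv_pow]
      field_simp
      ring
    rw [h, mul_zero, sub_eq_zero, hA2] at key
    exact hα n h1 h2 key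
  rw [Ecoef, ← hqdef]
  exact div_ne_zero (mul_ne_zero hqint hfac) hqsub

end Aux

/-- For `q = exp(2iπk/N)` a primitive `N`-th root of unity (`N` odd `≥ 3`, `k = 2k'`
with `k'` coprime to `N`), if `α ∈ ℂ` satisfies `e^{4iπα/N} ≠ q^{2j}` for all
`j = 1, …, N-1`, then the module `V_α` is simple: every nonzero subspace of `ℂ^N`
invariant under `E`, `F`, `H` and `K` is the whole space. -/
theorem Valpha_simple (N k' : ℕ) (hN : Odd N) (hN3 : 3 ≤ N)
    (hcop : Nat.Coprime k' N) (k : ℕ) (hk : k = 2 * k') (α : ℂ)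
    (hα : ∀ j : ℕ, 1 ≤ j → j ≤ N - 1 →
      Complex.exp (4 * Real.pi * Complex.I * α / N) ≠ qval N k ^ (2 * j)) :
    ∀ p : Submodule ℂ (Fin N → ℂ), p ≠ ⊥ →
      (∀ v ∈ p, Eop N k α v ∈ p) → (∀ v ∈ p, Fop N v ∈ p) →
      (∀ v ∈ p, Hop N k α v ∈ p) → (∀ v ∈ p, Kop N k α v ∈ p) →
      p = ⊤ := by
  intro p hbot hE hF hH hK
  have hN0 : 0 < N := by omega
  -- distinct H-eigenvalues
  have lam_ne : ∀ i j : Fin N, i ≠ j →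
      (α / k + (N - 1 : ℂ) - 2 * i.val) - (α / k + (N - 1 : ℂ) - 2 * j.val) ≠ 0 := by
    intro i j hij h
    have h2 : (i.val : ℂ) = j.val := by linear_combination -h / 2
    exact hij (Fin.ext (Nat.cast_inj.mp h2))
  -- rescaling helper
  have smul_single : ∀ (i : Fin N) (c : ℂ), c ≠ 0 → Pi.single i c ∈ p →
      Pi.single i (1 : ℂ) ∈ p := by
    intro i c hc hmem
    have hs := p.smul_mem c⁻¹ hmem
    have heq : c⁻¹ • (Pi.single i c : Fin N → ℂ) = Pi.single i 1 := by
      funext j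
      rw [Pi.smul_apply, Pi.single_apply, Pi.single_apply]
      split
      · rw [smul_eq_mul, inv_mul_cancel₀ hc]
      · rw [smul_zero]
    rwa [heq] at hs
  -- Step 1: p contains all coordinate projections of its elements
  have key : ∀ s : Finset (Fin N), ∀ v ∈ p, (∀ i, v i ≠ 0 → i ∈ s) →
      ∀ n, Pi.single n (v n) ∈ p := by
    intro s
    induction s using Finset.strongInduction with
    | _ s ih =>
      intro v hv hsupp n
      by_cases hvn : v n = 0
      · rw [hvn]; simp only [Pi.single_zero]; exact p.zero_mem
      by_cases hall : ∀ i, v i ≠ 0 → i = n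
      · have hveq : v = Pi.single n (v n) := by
          funext i
          rcases eq_or_ne i n with h | h
          · subst h; simp
          · rw [Pi.single_apply, if_neg h]
            by_contra hvi
            exact h (hall i hvi)
        rw [← hveq]; exact hv
      · push_neg at hall
        obtain ⟨n', hn'0, hn'n⟩ := hall
        set lam : Fin N → ℂ := fun i => α / k + (N - 1 : ℂ) - 2 * i.val with hlam
        have hwp : (Hop N k α v - lam n' • v) ∈ p :=
          p.sub_mem (hH v hv) (p.smul_mem _ hv)
        set w : Fin N → ℂ := Hop N k α v - lam n' • v with hwdef
        have hwi : ∀ i, w i = (lam i - lam n') * v i := by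
          intro i
          simp only [hwdef, Pi.sub_apply, Pi.smul_apply, smul_eq_mul, Hop,
            LinearMap.coe_mk, AddHom.coe_mk, hlam]
          ring
        have hmem : s.erase n' ⊂ s := Finset.erase_ssubset (hsupp n' hn'0)
        have hsingle := ih _ hmem w hwp (fun i hi => by
          rcases eq_or_ne i n' with h | h
          · exfalso; apply hi; rw [h, hwi]; ring
          · refine Finset.mem_erase.mpr ⟨h, hsupp i ?_⟩
            intro hvi; apply hi; rw [hwi, hvi, mul_zero]) n
        have hc : lam n - lam n' ≠ 0 := lam_ne n n' (Ne.symm hn'n)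
        have hs2 := p.smul_mem (lam n - lam n')⁻¹ hsingle
        have heq : (lam n - lam n')⁻¹ • (Pi.single n (w n) : Fin N → ℂ) = Pi.single n (v n) := by
          funext i
          rw [Pi.smul_apply, Pi.single_apply, Pi.single_apply, hwi]
          split
          · rw [smul_eq_mul, inv_mul_cancel_left₀ hc]
          · rw [smul_zero]
        rwa [heq] at hs2
  -- Step 2: get one standard basis vector in p
  obtain ⟨v, hvp, hv0⟩ := (Submodule.ne_bot_iff p).mp hbot
  obtain ⟨m, hm⟩ : ∃ m, v m ≠ 0 := by
    by_contra h; push_neg at h; exact hv0 (funext fun i => h i)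
  have hsm1 : Pi.single m (1 : ℂ) ∈ p :=
    smul_single m (v m) hm (key Finset.univ v hvp (fun i _ => Finset.mem_univ i) m)
  -- action of E and F on basis vectors
  have hEsing : ∀ (s : ℕ) (hs : s + 1 < N),
      Eop N k α (Pi.single (⟨s + 1, hs⟩ : Fin N) (1 : ℂ)) =
        Pi.single (⟨s, by omega⟩ : Fin N) (Ecoef N k α (s + 1)) := by
    intro s hs
    funext i
    rcases i with ⟨iv, hiv⟩
    simp only [Eop, LinearMap.coe_mk, AddHom.coe_mk, Pi.single_apply, Fin.mk.injEq]
    by_cases hivs : iv = s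
    · subst hivs
      rw [dif_pos (by omega : iv + 1 < N), if_pos rfl, if_pos rfl, mul_one]
    · by_cases h : iv + 1 < N
      · rw [dif_pos h, if_neg (by omega), if_neg hivs, mul_zero]
      · rw [dif_neg h, if_neg hivs]
  have hFsing : ∀ (s : ℕ) (hs : s + 1 < N),
      Fop N (Pi.single (⟨s, by omega⟩ : Fin N) (1 : ℂ)) =
        Pi.single (⟨s + 1, hs⟩ : Fin N) (1 : ℂ) := by
    intro s hs
    funext i
    rcases i with ⟨iv, hiv⟩
    simp only [Fop, LinearMap.coe_mk, AddHom.coe_mk, Pi.single_apply, Fin.mk.injEq]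
    by_cases hivs : iv = s + 1
    · subst hivs
      rw [dif_pos (by omega : 0 < s + 1), if_pos (by omega : s + 1 - 1 = s), if_pos rfl]
    · by_cases h : 0 < iv
      · rw [dif_pos h, if_neg (by omega), if_neg hivs]
      · rw [dif_neg h, if_neg hivs]
  -- Step 3: descend to e_0
  have hdown : ∀ t : ℕ, ∀ ht : t < N, Pi.single (⟨t, ht⟩ : Fin N) (1 : ℂ) ∈ p →
      Pi.single (⟨0, hN0⟩ : Fin N) (1 : ℂ) ∈ p := by
    intro t
    induction t with
    | zero => intro ht h; exact h
    | succ s ihs =>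
      intro ht h
      have hE1 := hE _ h
      rw [hEsing s ht] at hE1
      have hcne : Ecoef N k α (s + 1) ≠ 0 :=
        Ecoef_ne_zero N k' hN hN3 hcop k hk α hα (s + 1) (by omega) (by omega)
      exact ihs (by omega) (smul_single _ _ hcne hE1)
  have he0 : Pi.single (⟨0, hN0⟩ : Fin N) (1 : ℂ) ∈ p := hdown m.val m.isLt hsm1
  -- Step 4: ascend to all e_t
  have hallmem : ∀ t : ℕ, ∀ ht : t < N, Pi.single (⟨t, ht⟩ : Fin N) (1 : ℂ) ∈ p := by
    intro t
    induction t with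
    | zero => intro ht; exact he0
    | succ s ihs =>
      intro ht
      have h1 := hF _ (ihs (by omega))
      rwa [hFsing s ht] at h1
  -- Step 5: conclude
  rw [eq_top_iff]
  intro u _
  have hu : u = ∑ i : Fin N, Pi.single i (u i) := (Finset.univ_sum_single u).symm
  rw [hu]
  refine Submodule.sum_mem p (fun i _ => ?_)
  have heq : (Pi.single i (u i) : Fin N → ℂ) = u i • (Pi.single i 1 : Fin N → ℂ) := by
    funext j
    rw [Pi.smul_apply, Pi.single_apply, Pi.single_apply]
    split
    · rw [smul_eq_mul, mul_one]
    · rw [smul_zero]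
  rw [heq]
  exact p.smul_mem _ (hallmem i.val i.isLt)
end
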